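/- Let k ≥ 3 and let m be a positive integer with m ≤ (k−1)/2 and gcd(m,k) = 1. Let π ∈ 𝕊_{k−1} be an r-invariant permutation (r(π) = π) satisfying π_m = 1. Then cs_i(π) = k for all i ∈ {1,…,m−1}, and cs_m(π) = C(k,2) − (m−1)k. -/

import Mathlib

open Finset

attribute [local instance] Classical.propDecidable

noncomputable section

/-- `π` is a permutation of `{1,…,k-1}` given in one-line notation
(`π p` is the entry at position `p`), normalized to `0` outside `[1,k-1]`. -/
def OneLine (k : ℕ) (π : ℕ → ℕ) : Prop :=
  Set.BijOn π (Set.Icc 1 (k - 1)) (Set.Icc 1 (k - 1)) ∧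
    ∀ p, p ∉ Set.Icc 1 (k - 1) → π p = 0

/-- The set `S(π)` of adjacent inversions of `π`:
those `i ∈ [1,k-2]` such that `i+1` appears before `i` in `π`. -/
def adjInvF (k : ℕ) (π : ℕ → ℕ) : Finset ℕ :=
  (Finset.Icc 1 (k - 2)).filter fun i =>
    ∃ p ∈ Finset.Icc 1 (k - 1), ∃ r ∈ Finset.Icc 1 (k - 1),
      p < r ∧ π p = i + 1 ∧ π r = i

/-- `W^π_{k,q}`: weakly increasing `(k-1)`-tuples with entries in `[0,q-1]`
that are strictly increasing at every adjacent inversion of `π`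
(vectors are functions `ℕ → ℕ` supported on `[1,k-1]`). -/
def W (k q : ℕ) (π : ℕ → ℕ) : Set (ℕ → ℕ) :=
  {v | (∀ i, i ∉ Finset.Icc 1 (k - 1) → v i = 0) ∧
       (∀ i ∈ Finset.Icc 1 (k - 1), v i ≤ q - 1) ∧
       (∀ i, 1 ≤ i → i + 1 ≤ k - 1 → v i ≤ v (i + 1)) ∧
       (∀ i ∈ adjInvF k π, v i < v (i + 1))}

/-- `x + e_{π_a} + e_{π_{a+1}} + ⋯ + e_{π_{b-1}}`. -/
def shift (π : ℕ → ℕ) (a b : ℕ) (x : ℕ → ℕ) : ℕ → ℕ :=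
  fun i => x i + if i ∈ (Finset.Icc a (b - 1)).image π then 1 else 0

/-- Adjacency in the graph `G^π_{k,q}`: one vertex is obtained from the other
by adding `e_{π_a} + ⋯ + e_{π_{b-1}}` for some `1 ≤ a < b ≤ k`. -/
def AdjRel (k : ℕ) (π : ℕ → ℕ) (x y : ℕ → ℕ) : Prop :=
  ∃ a b, 1 ≤ a ∧ a < b ∧ b ≤ k ∧ (y = shift π a b x ∨ x = shift π a b y)

/-- The number of maximal blocks of consecutive integers of a finite set `T ⊆ ℕ`. -/
def numBlocks (T : Finset ℕ) : ℕ := (T.filter fun t => t + 1 ∉ T).card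

/-- `cs_i(π)`: the number of pairs `1 ≤ a < b ≤ k` such that
`T_{a,b} = {π_a,…,π_{b-1}}` decomposes into exactly `i` maximal blocks
of consecutive integers. -/
def cs (k : ℕ) (π : ℕ → ℕ) (i : ℕ) : ℕ :=
  ((Finset.Icc 1 k ×ˢ Finset.Icc 1 k).filter fun p =>
    p.1 < p.2 ∧ numBlocks ((Finset.Icc p.1 (p.2 - 1)).image π) = i).card

/-- For `i < j`, `{i,j}` is an edge of `G_π` iff `{i,i+1,…,j-1}` occurs as
a set of consecutive entries of `π`. -/
def GpiEdge (k : ℕ) (π : ℕ → ℕ) (i j : ℕ) : Prop :=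
  ∃ a, 1 ≤ a ∧ a + (j - i) ≤ k ∧
    (Finset.Icc a (a + (j - i) - 1)).image π = Finset.Icc i (j - 1)

/-- Unordered adjacency in `G_π`. -/
def GpiAdjU (k : ℕ) (π : ℕ → ℕ) (i j : ℕ) : Prop :=
  (i < j ∧ GpiEdge k π i j) ∨ (j < i ∧ GpiEdge k π j i)

/-- The position of the value `v` in the one-line notation of `π`. -/
def posOf (k : ℕ) (π : ℕ → ℕ) (v : ℕ) : ℕ :=
  if h : ((Finset.Icc 1 (k - 1)).filter fun t => π t = v).Nonempty then
    ((Finset.Icc 1 (k - 1)).filter fun t => π t = v).min' h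
  else 0

/-- The rotation `r` on one-line permutations: if `π = π₁…π_{t-1}(k-1)π_{t+1}…π_{k-1}`,
then `r(π) = (π_{t+1}+1)…(π_{k-1}+1) 1 (π₁+1)…(π_{t-1}+1)`. -/
def rot (k : ℕ) (π : ℕ → ℕ) : ℕ → ℕ := fun p =>
  if p ∉ Finset.Icc 1 (k - 1) then 0
  else if p < k - posOf k π (k - 1) then π (posOf k π (k - 1) + p) + 1
  else if p = k - posOf k π (k - 1) then 1
  else π (p - (k - posOf k π (k - 1))) + 1

/-- The reflection `s` on one-line permutations: if `π = π₁…π_{i-1} 1 π_{i+1}…π_{k-1}`,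
then `s(π) = (k+1-π_{i-1})…(k+1-π₁) 1 (k+1-π_{k-1})…(k+1-π_{i+1})`. -/
def srefl (k : ℕ) (π : ℕ → ℕ) : ℕ → ℕ := fun p =>
  if p ∉ Finset.Icc 1 (k - 1) then 0
  else if p < posOf k π 1 then k + 1 - π (posOf k π 1 - p)
  else if p = posOf k π 1 then 1
  else k + 1 - π (k + posOf k π 1 - p)

/-- The rotation `ρ` of the vertex set `{1,…,k}`. -/
def rotV (k i : ℕ) : ℕ := if i < k then i + 1 else 1

/-- The reflection `σ` of the vertex set `{1,…,k}`. -/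
def sreflV (k i : ℕ) : ℕ := if i = 1 then 1 else k + 2 - i

/-- The maximal sorted family `(S₁,…,S_k)` associated with `σ`, `0`-indexed:
`sortedFam k σ (i-1) = S_i`. -/
def sortedFam (k : ℕ) (σ : ℕ → ℕ) : ℕ → Finset ℕ
  | 0 => insert 1 ((adjInvF k σ).image (· + 1))
  | j + 1 => insert (σ (j + 1) + 1) ((sortedFam k σ j).erase (σ (j + 1)))

/-- `ear(π)`. -/
def ear (k : ℕ) (π : ℕ → ℕ) : ℕ :=
  ((Finset.Icc 1 (k - 2)).filter fun i => π (i + 1) = π i + 1 ∨ π i = π (i + 1) + 1).card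
    + (({1, k - 1} : Finset ℕ) ∩ ({π 1, π (k - 1)} : Finset ℕ)).card

/-- `ε_i(π) = 1` if `i-1 ∈ S(π)` and `0` otherwise. -/
def eps (k : ℕ) (π : ℕ → ℕ) (i : ℕ) : ℕ := if i - 1 ∈ adjInvF k π then 1 else 0

/-- Extension of a vector with the conventions `x_k = q-1` (`x₀ = 0` holds by
the normalization of vectors in `W^π_{k,q}`). -/
def xext (k q : ℕ) (x : ℕ → ℕ) (i : ℕ) : ℕ := if i = k then q - 1 else x i

/-- The label list `L^π(x) = {i ∈ [1,k] : x_{i-1} < x_i - ε_i(π)}`. -/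
def labels (k q : ℕ) (π : ℕ → ℕ) (x : ℕ → ℕ) : Finset ℕ :=
  (Finset.Icc 1 k).filter fun i => xext k q x (i - 1) + eps k π i < xext k q x i

/-- A Sperner labeling of `G^π_{k,q}`. -/
def IsSperner (k q : ℕ) (π : ℕ → ℕ) (f : (ℕ → ℕ) → ℕ) : Prop :=
  (∀ x ∈ W k q π, f x = 0 ∨ f x ∈ labels k q π x) ∧
  (∀ x ∈ W k q π, ∀ y ∈ W k q π, AdjRel k π x y → f x = f y ∨ f x = 0 ∨ f y = 0)

/-- The entry `w` appears between the entries `u` and `v` in `π`. -/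
def Between (k : ℕ) (π : ℕ → ℕ) (u v w : ℕ) : Prop :=
  (posOf k π u < posOf k π w ∧ posOf k π w < posOf k π v) ∨
  (posOf k π v < posOf k π w ∧ posOf k π w < posOf k π u)

/-- A good set of colors for `π`. -/
def GoodSet (k : ℕ) (π : ℕ → ℕ) (C : Finset ℕ) : Prop :=
  C ⊆ Finset.Icc 1 k ∧
  (∀ i ∈ C, ∀ j ∈ C, i ≠ j → ¬ GpiAdjU k π i j) ∧
  (∀ a ∈ C, ∀ b ∈ C, 1 < a → a < b → b < k →
      ((Between k π (a - 1) b a ∨ Between k π (a - 1) b (b - 1)) ∧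
       (Between k π (b - 1) a (a - 1) ∨ Between k π (b - 1) a b))) ∧
  (1 ∈ C → ∀ b ∈ C, b ≠ 1 → Between k π 1 (b - 1) b) ∧
  (k ∈ C → ∀ b ∈ C, b ≠ k → Between k π b (k - 1) (b - 1))

/-- `x_a - x_{a-1} - ε_a(π)`, the `a`-th coordinate of the distance map `D`. -/
def dval (k q : ℕ) (π : ℕ → ℕ) (x : ℕ → ℕ) (a : ℕ) : ℕ :=
  xext k q x a - xext k q x (a - 1) - eps k π a

/-- The distance coloring determined by a set of colors `C`:
`x` gets color `a ∈ C` if `dval x a` is the unique maximum of `dval x` on `C`,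
and `0` otherwise. -/
def dcol (k q : ℕ) (π : ℕ → ℕ) (C : Finset ℕ) (x : ℕ → ℕ) : ℕ :=
  if h : ∃ a ∈ C, ∀ b ∈ C, b ≠ a → dval k q π x b < dval k q π x a then h.choose else 0


namespace Stmt11Aux

lemma mulmod (a b n : ℕ) : (a % n) * b % n = a * b % n := Nat.mod_mul_mod a b n

/-- Counting elements of an interval shifted out of itself mod `k`. -/
lemma count_shift_out (k m a b : ℕ) (hk : 3 ≤ k) (hm : 1 ≤ m) (hm2 : 2 * m ≤ k - 1)
    (ha : 1 ≤ a) (hab : a < b) (hbk : b ≤ k) :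
    ((Finset.Icc a (b-1)).filter fun p => (p + m) % k ∉ Finset.Icc a (b-1)).card
      = min (min (b - a) m) (k - (b - a)) := by
  have hmod : ∀ p, a ≤ p → p ≤ b - 1 →
      (p + m) % k = if p + m < k then p + m else p + m - k := by
    intro p hp1 hp2
    split
    · exact Nat.mod_eq_of_lt (by omega)
    · rw [Nat.mod_eq_sub_mod (by omega), Nat.mod_eq_of_lt (by omega)]
  have hgood : (Finset.Icc a (b-1)).filter (fun p => (p + m) % k ∈ Finset.Icc a (b-1))
      = Finset.Icc a (b-1-m) ∪ Finset.Icc (a + k - m) (b-1) := by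
    ext p
    simp only [Finset.mem_filter, Finset.mem_Icc, Finset.mem_union]
    constructor
    · rintro ⟨⟨hp1, hp2⟩, hq⟩
      rw [hmod p hp1 hp2] at hq
      split at hq <;> omega
    · intro h
      have hp1 : a ≤ p := by omega
      have hp2 : p ≤ b - 1 := by omega
      refine ⟨⟨hp1, hp2⟩, ?_⟩
      rw [hmod p hp1 hp2]
      split <;> omega
  have hdisj : Disjoint (Finset.Icc a (b-1-m)) (Finset.Icc (a + k - m) (b-1)) := by
    rw [Finset.disjoint_left]
    intro x hx hy
    simp only [Finset.mem_Icc] at hx hy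
    omega
  have hsum := Finset.card_filter_add_card_filter_not
    (s := Finset.Icc a (b-1)) (p := fun p => (p + m) % k ∈ Finset.Icc a (b-1))
  rw [hgood, Finset.card_union_of_disjoint hdisj] at hsum
  simp only [Nat.card_Icc] at hsum ⊢
  omega

end Stmt11Aux

theorem stmt11 (k m : ℕ) (hk : 3 ≤ k) (hm : 1 ≤ m) (hm2 : 2 * m ≤ k - 1)
    (hgcd : Nat.gcd m k = 1) (π : ℕ → ℕ) (hπ : OneLine k π)
    (hrinv : rot k π = π) (hm1 : π m = 1) :
    (∀ i, 1 ≤ i → i ≤ m - 1 → cs k π i = k) ∧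
      cs k π m = Nat.choose k 2 - (m - 1) * k := by
  classical
  obtain ⟨hbij, hzero⟩ := hπ
  have hco : Nat.Coprime m k := hgcd
  obtain ⟨c, -, hc⟩ := Nat.exists_mul_mod_eq_one_of_coprime hco (by omega)
  -- the position map j ↦ j*m % k lands in [1,k-1]
  have hnz : ∀ j, 1 ≤ j → j ≤ k - 1 → 1 ≤ j * m % k ∧ j * m % k ≤ k - 1 := by
    intro j h1 h2
    have hlt : j * m % k < k := Nat.mod_lt _ (by omega)
    have hne : j * m % k ≠ 0 := by
      intro h0
      have hdvd : k ∣ j * m := Nat.dvd_of_mod_eq_zero h0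
      have : k ∣ j := (Nat.Coprime.dvd_of_dvd_mul_right hco.symm hdvd)
      have := Nat.le_of_dvd (by omega) this
      omega
    omega
  -- inverses
  have hinv : ∀ p, p < k → (p * c % k) * m % k = p := by
    intro p hp
    rw [Stmt11Aux.mulmod, mul_assoc, mul_comm c m, ← Nat.mul_mod_mod, hc, mul_one,
      Nat.mod_eq_of_lt hp]
  have hinv2 : ∀ t, t < k → (t * m % k) * c % k = t := by
    intro t ht
    rw [Stmt11Aux.mulmod, mul_assoc, ← Nat.mul_mod_mod, hc, mul_one, Nat.mod_eq_of_lt ht]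
  -- locate k-1
  have hk1mem : (k-1) ∈ Set.Icc 1 (k-1) := by constructor <;> omega
  obtain ⟨t0, ht0mem, ht0⟩ := hbij.surjOn hk1mem
  have hfiltne : ((Finset.Icc 1 (k - 1)).filter fun t => π t = k - 1).Nonempty := by
    refine ⟨t0, ?_⟩
    simp only [Finset.mem_filter, Finset.mem_Icc]
    exact ⟨⟨ht0mem.1, ht0mem.2⟩, ht0⟩
  set t := posOf k π (k-1) with hts
  have htmem : t ∈ (Finset.Icc 1 (k - 1)).filter fun t => π t = k - 1 := by
    rw [hts, posOf, dif_pos hfiltne]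
    exact Finset.min'_mem _ _
  simp only [Finset.mem_filter, Finset.mem_Icc] at htmem
  obtain ⟨⟨ht1, ht2⟩, htval⟩ := htmem
  -- rot invariance at k - t : π (k - t) = 1
  have hktm : π (k - t) = 1 := by
    have h := congrFun hrinv (k - t)
    rw [rot] at h
    rw [if_neg, if_neg, if_pos rfl] at h
    · exact h.symm
    · rw [← hts]; omega
    · simp only [Finset.mem_Icc, not_and, not_le, not_not]
      omega
  -- hence t = k - m
  have htm : t = k - m := by
    have hmm : (m : ℕ) ∈ Set.Icc 1 (k-1) := by constructor <;> omega
    have hktmem : (k - t) ∈ Set.Icc 1 (k-1) := by constructor <;> omega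
    have := hbij.injOn hmm hktmem (by rw [hm1, hktm])
    omega
  -- recurrences
  have hii : ∀ p, 1 ≤ p → p < m → π p = π (k - m + p) + 1 := by
    intro p hp1 hp2
    have h := congrFun hrinv p
    rw [rot] at h
    rw [if_neg, if_pos] at h
    · rw [← hts, htm] at h
      exact h.symm
    · rw [← hts]; omega
    · simp only [Finset.mem_Icc, not_and, not_le, not_not]
      omega
  have hiii : ∀ p, m < p → p ≤ k - 1 → π p = π (p - m) + 1 := by
    intro p hp1 hp2
    have h := congrFun hrinv p
    rw [rot] at h
    rw [if_neg, if_neg, if_neg] at h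
    · rw [← hts, htm] at h
      rw [← h]
      congr 2
      omega
    · rw [← hts]; omega
    · rw [← hts]; omega
    · simp only [Finset.mem_Icc, not_and, not_le, not_not]
      omega
  -- the explicit description of π
  have hval : ∀ j, 1 ≤ j → j ≤ k - 1 → π (j * m % k) = j := by
    intro j
    induction j with
    | zero => omega
    | succ j ih =>
      intro _ h2
      rcases Nat.eq_zero_or_pos j with hj0 | hj1
      · subst hj0
        have : 1 * m % k = m := by rw [one_mul, Nat.mod_eq_of_lt (by omega)]
        rw [this]
        exact hm1
      · have hih := ih (by omega) (by omega)
        have hpmem := hnz j (by omega) (by omega)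
        have hp' : (j+1) * m % k = (j * m % k + m) % k := by
          rw [add_mul, one_mul, Nat.mod_add_mod]
        have hp1mem := hnz (j+1) (by omega) (by omega)
        rcases Nat.lt_or_ge (j * m % k + m) k with hlt | hge
        · rw [hp', Nat.mod_eq_of_lt hlt]
          have := hiii (j * m % k + m) (by omega) (by omega)
          rw [this]
          have : j * m % k + m - m = j * m % k := by omega
          rw [this, hih]
        · have hne : j * m % k + m ≠ k := by
            intro h0
            rw [hp', h0, Nat.mod_self] at hp1mem
            omega
          have hmod2 : (j * m % k + m) % k = j * m % k + m - k := by
            rw [Nat.mod_eq_sub_mod hge, Nat.mod_eq_of_lt (by omega)]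
          rw [hp', hmod2]
          have := hii (j * m % k + m - k) (by omega) (by omega)
          rw [this]
          have : k - m + (j * m % k + m - k) = j * m % k := by omega
          rw [this, hih]
  -- membership in T_{a,b}
  have hmemT : ∀ a b, 1 ≤ a → a < b → b ≤ k → ∀ s,
      (s ∈ (Finset.Icc a (b-1)).image π ↔
        (1 ≤ s ∧ s ≤ k - 1) ∧ s * m % k ∈ Finset.Icc a (b-1)) := by
    intro a b ha hab hbk s
    constructor
    · rintro hs
      rw [Finset.mem_image] at hs
      obtain ⟨p, hp, rfl⟩ := hs
      simp only [Finset.mem_Icc] at hp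
      have hpmem : p ∈ Set.Icc 1 (k-1) := by constructor <;> omega
      have hπp := hbij.mapsTo hpmem
      obtain ⟨hs1, hs2⟩ := hπp
      refine ⟨⟨hs1, hs2⟩, ?_⟩
      have heq := hval (π p) hs1 hs2
      have hposmem : π p * m % k ∈ Set.Icc 1 (k-1) := by
        have := hnz (π p) hs1 hs2
        constructor <;> omega
      have := hbij.injOn hposmem hpmem heq
      rw [this]
      simp only [Finset.mem_Icc]
      exact hp
    · rintro ⟨⟨hs1, hs2⟩, hmem⟩
      rw [Finset.mem_image]
      exact ⟨s * m % k, hmem, hval s hs1 hs2⟩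
  -- the numBlocks formula
  have hNB : ∀ a b, 1 ≤ a → a < b → b ≤ k →
      numBlocks ((Finset.Icc a (b-1)).image π) = min (min (b-a) m) (k - (b-a)) := by
    intro a b ha hab hbk
    rw [numBlocks]
    have e1 : ((Finset.Icc a (b-1)).image π).filter
          (fun s => s + 1 ∉ (Finset.Icc a (b-1)).image π)
        = (Finset.Icc 1 (k-1)).filter
          (fun s => s * m % k ∈ Finset.Icc a (b-1) ∧ (s+1) * m % k ∉ Finset.Icc a (b-1)) := by
      ext s
      simp only [Finset.mem_filter, hmemT a b ha hab hbk]
      constructor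
      · rintro ⟨⟨⟨hs1, hs2⟩, hmem⟩, hnot⟩
        refine ⟨Finset.mem_Icc.mpr ⟨hs1, hs2⟩, hmem, ?_⟩
        intro hmem'
        by_cases hcase : s + 1 ≤ k - 1
        · exact hnot ⟨⟨by omega, hcase⟩, hmem'⟩
        · have h0 : (s+1) * m % k = 0 := by
            have hsk : s + 1 = k := by omega
            rw [hsk, Nat.mul_mod_right]
          rw [h0] at hmem'
          have := Finset.mem_Icc.mp hmem'
          omega
      · rintro ⟨hs, hmem, hnot⟩
        have hs' := Finset.mem_Icc.mp hs
        exact ⟨⟨⟨hs'.1, hs'.2⟩, hmem⟩, fun h => hnot h.2⟩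
    rw [e1]
    have e2 : ((Finset.Icc 1 (k-1)).filter
          (fun s => s * m % k ∈ Finset.Icc a (b-1) ∧ (s+1) * m % k ∉ Finset.Icc a (b-1))).card
        = ((Finset.Icc a (b-1)).filter fun p => (p + m) % k ∉ Finset.Icc a (b-1)).card := by
      have hkey : ∀ s, (s+1) * m % k = (s * m % k + m) % k := by
        intro s
        rw [add_mul, one_mul, Nat.mod_add_mod]
      apply Finset.card_nbij' (i := fun s => s * m % k) (j := fun p => p * c % k)
      · intro s hs
        simp only [Finset.mem_coe, Finset.mem_filter] at hs ⊢
        obtain ⟨_, hmem, hnot⟩ := hs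
        refine ⟨hmem, ?_⟩
        rw [← hkey s]
        exact hnot
      · intro p hp
        simp only [Finset.mem_coe, Finset.mem_filter] at hp ⊢
        obtain ⟨hpI, hnot⟩ := hp
        have hp12 := Finset.mem_Icc.mp hpI
        have hplt : p < k := by omega
        have hpc := hinv p hplt
        have hc1 : 1 ≤ p * c % k := by
          rcases Nat.eq_zero_or_pos (p * c % k) with h0 | h1
          · rw [h0, Nat.zero_mul, Nat.zero_mod] at hpc; omega
          · omega
        have hc2 : p * c % k ≤ k - 1 := by
          have := Nat.mod_lt (p * c) (show 0 < k by omega)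
          omega
        refine ⟨Finset.mem_Icc.mpr ⟨hc1, hc2⟩, ?_, ?_⟩
        · rw [hpc]; exact hpI
        · rw [hkey, hpc]
          exact hnot
      · intro s hs
        simp only [Finset.mem_coe, Finset.mem_filter, Finset.mem_Icc] at hs
        exact hinv2 s (by omega)
      · intro p hp
        simp only [Finset.mem_coe, Finset.mem_filter, Finset.mem_Icc] at hp
        exact hinv p (by omega)
    rw [e2]
    exact Stmt11Aux.count_shift_out k m a b hk hm hm2 ha hab hbk
  -- rewrite cs via the min formula
  have hcs : ∀ i, cs k π i = ((Finset.Icc 1 k ×ˢ Finset.Icc 1 k).filter fun p =>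
      p.1 < p.2 ∧ min (min (p.2 - p.1) m) (k - (p.2 - p.1)) = i).card := by
    intro i
    rw [cs]
    congr 1
    apply Finset.filter_congr
    intro p hp
    simp only [Finset.mem_product, Finset.mem_Icc] at hp
    exact and_congr_right fun hlt => by rw [hNB p.1 p.2 hp.1.1 hlt hp.2.2]
  -- part A : cs_i = k for 1 ≤ i ≤ m-1
  have hA : ∀ i, 1 ≤ i → i ≤ m - 1 → cs k π i = k := by
    intro i hi1 hi2
    rw [hcs i]
    have hkcard : (Finset.Icc 1 k).card = k := by rw [Nat.card_Icc]; omega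
    rw [← hkcard]
    apply Finset.card_nbij' (i := fun p => if p.2 - p.1 = i then p.1 else p.2)
      (j := fun a => if a + i ≤ k then (a, a+i) else (a - (k-i), a))
    · rintro ⟨a, b⟩ hp
      simp only [Finset.mem_coe, Finset.mem_filter, Finset.mem_product, Finset.mem_Icc] at hp ⊢
      split <;> omega
    · intro a ha
      simp only [Finset.mem_coe, Finset.mem_Icc] at ha
      dsimp only; split <;>
        · simp only [Finset.mem_coe, Finset.mem_filter, Finset.mem_product, Finset.mem_Icc]
          omega
    · rintro ⟨a, b⟩ hp
      simp only [Finset.mem_coe, Finset.mem_filter, Finset.mem_product, Finset.mem_Icc] at hp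
      have hcases : b - a = i ∨ b - a = k - i := by omega
      by_cases hd : b - a = i
      · dsimp only; rw [if_pos hd, if_pos (by omega), Prod.mk.injEq]
        omega
      · dsimp only; rw [if_neg hd, if_neg (by omega), Prod.mk.injEq]
        omega
    · intro a ha
      simp only [Finset.mem_coe, Finset.mem_Icc] at ha
      by_cases hle : a + i ≤ k
      · dsimp only; rw [if_pos hle, if_pos (by omega)]
      · dsimp only; rw [if_neg hle, if_neg (by omega)]
  refine ⟨hA, ?_⟩
  -- total count
  set P := (Finset.Icc 1 k ×ˢ Finset.Icc 1 k).filter (fun p => p.1 < p.2) with hP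
  have htot : P.card = k.choose 2 := by
    have hswap : ((Finset.Icc 1 k ×ˢ Finset.Icc 1 k).filter (fun p => p.2 < p.1)).card
        = P.card := by
      apply Finset.card_nbij' (i := Prod.swap) (j := Prod.swap)
      · rintro ⟨a, b⟩ hp
        simp only [Finset.mem_coe, hP, Finset.mem_filter, Finset.mem_product, Finset.mem_Icc,
          Prod.swap_prod_mk] at hp ⊢
        omega
      · rintro ⟨a, b⟩ hp
        simp only [Finset.mem_coe, hP, Finset.mem_filter, Finset.mem_product, Finset.mem_Icc,
          Prod.swap_prod_mk] at hp ⊢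
        omega
      · rintro ⟨a, b⟩ _
        rfl
      · rintro ⟨a, b⟩ _
        rfl
    have hdiag : ((Finset.Icc 1 k ×ˢ Finset.Icc 1 k).filter (fun p => ¬ p.1 < p.2)).card
        = ((Finset.Icc 1 k ×ˢ Finset.Icc 1 k).filter (fun p => p.2 < p.1)).card + k := by
      have hsplit : ((Finset.Icc 1 k ×ˢ Finset.Icc 1 k).filter (fun p => ¬ p.1 < p.2))
          = ((Finset.Icc 1 k ×ˢ Finset.Icc 1 k).filter (fun p => p.2 < p.1)) ∪
            ((Finset.Icc 1 k ×ˢ Finset.Icc 1 k).filter (fun p => p.1 = p.2)) := by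
        ext ⟨a, b⟩
        simp only [Finset.mem_filter, Finset.mem_union, Finset.mem_product, Finset.mem_Icc]
        omega
      have hdisj2 : Disjoint
          ((Finset.Icc 1 k ×ˢ Finset.Icc 1 k).filter (fun p => p.2 < p.1))
          ((Finset.Icc 1 k ×ˢ Finset.Icc 1 k).filter (fun p => p.1 = p.2)) := by
        rw [Finset.disjoint_left]
        rintro ⟨a, b⟩ h1 h2
        simp only [Finset.mem_filter, Finset.mem_product, Finset.mem_Icc] at h1 h2
        omega
      have hdcard : ((Finset.Icc 1 k ×ˢ Finset.Icc 1 k).filter (fun p => p.1 = p.2)).card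
          = k := by
        have : ((Finset.Icc 1 k ×ˢ Finset.Icc 1 k).filter (fun p => p.1 = p.2)).card
            = (Finset.Icc 1 k).card := by
          apply Finset.card_nbij' (i := fun p => p.1) (j := fun a => (a, a))
          · rintro ⟨a, b⟩ hp
            simp only [Finset.mem_coe, Finset.mem_filter, Finset.mem_product, Finset.mem_Icc] at hp ⊢
            omega
          · intro a ha
            exact Finset.mem_filter.mpr ⟨Finset.mem_product.mpr ⟨ha, ha⟩, rfl⟩
          · rintro ⟨a, b⟩ hp
            simp only [Finset.mem_coe, Finset.mem_filter] at hp
            have hab : a = b := hp.2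
            subst hab
            rfl
          · intro a _
            rfl
        rw [this, Nat.card_Icc]
        omega
      rw [hsplit, Finset.card_union_of_disjoint hdisj2, hdcard]
    have hsum := Finset.card_filter_add_card_filter_not
      (s := Finset.Icc 1 k ×ˢ Finset.Icc 1 k) (p := fun p => p.1 < p.2)
    rw [hdiag, hswap, ← hP] at hsum
    have hprodcard : (Finset.Icc 1 k ×ˢ Finset.Icc 1 k).card = k * k := by
      rw [Finset.card_product, Nat.card_Icc]
      congr 1 <;> omega
    rw [hprodcard] at hsum
    obtain ⟨n, rfl⟩ : ∃ n, k = n + 1 := ⟨k - 1, by omega⟩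
    have hkk : (n+1) * (n+1) = (n+1) * n + (n+1) := by ring
    rw [hkk] at hsum
    rw [Nat.choose_two_right]
    have hsub : n + 1 - 1 = n := by omega
    rw [hsub]
    generalize hy : (n+1) * n = y at hsum ⊢
    omega
  -- fiberwise decomposition
  have hfib : P.card = ∑ i ∈ Finset.Icc 1 m, cs k π i := by
    rw [Finset.card_eq_sum_card_fiberwise
      (f := fun p : ℕ × ℕ => min (min (p.2 - p.1) m) (k - (p.2 - p.1)))
      (t := Finset.Icc 1 m) ?_]
    · apply Finset.sum_congr rfl
      intro i _
      rw [hcs i, hP, Finset.filter_filter]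
    · rintro ⟨a, b⟩ hp
      simp only [Finset.mem_coe, hP, Finset.mem_filter, Finset.mem_product, Finset.mem_Icc] at hp ⊢
      omega
  have hsplitm : ∑ i ∈ Finset.Icc 1 m, cs k π i
      = (∑ i ∈ Finset.Icc 1 (m-1), cs k π i) + cs k π m := by
    have h1 : Finset.Icc 1 m = insert m (Finset.Icc 1 (m-1)) := by
      ext x
      simp only [Finset.mem_Icc, Finset.mem_insert]
      omega
    rw [h1, Finset.sum_insert (by simp only [Finset.mem_Icc]; omega)]
    exact Nat.add_comm _ _
  have hconst : ∑ i ∈ Finset.Icc 1 (m-1), cs k π i = (m-1) * k := by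
    rw [Finset.sum_congr rfl (fun i hi => by
      simp only [Finset.mem_Icc] at hi
      exact hA i hi.1 hi.2)]
    rw [Finset.sum_const, Nat.card_Icc, smul_eq_mul]
    congr 1
  rw [hfib, hsplitm, hconst] at htot
  omega

end
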